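/- (Theorem 3.1, explicit form) For every Lie algebra automorphism τ of B there exist μ, ν ∈ F* and ξ ∈ {1, −1} such that τ(L_{α,i}) = ξ·μ^α·ν^i·L_{ξ(α+i)−i, i} for all α ∈ ℤ and i ∈ ℕ. -/

import Mathlib

set_option linter.unusedSectionVars false
set_option maxHeartbeats 1000000

namespace AutBlock

variable {F : Type*} [Field F] [CharZero F] {B : Type*} [LieRing B] [LieAlgebra F B]

/-- Structure constants in the `N`-coordinates. -/
def Cc (p q : ℤ × ℕ) : ℤ := p.1 * (q.2 + 1) - q.1 * (p.2 + 1)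

/-- The bracket as a bilinear map. -/
def br : B →ₗ[F] B →ₗ[F] B := LinearMap.mk₂ F (fun x y => ⁅x, y⁆) add_lie smul_lie lie_add lie_smul

@[simp] lemma br_apply (x y : B) : br (F := F) x y = ⁅x, y⁆ := rfl

theorem repr_lie (N : Module.Basis (ℤ × ℕ) F B)
    (hN : ∀ p q : ℤ × ℕ, ⁅N p, N q⁆ = ((Cc p q : ℤ) : F) • N (p + q)) (a b : B) (z : ℤ × ℕ) :
    N.repr ⁅a, b⁆ z = ∑ p ∈ (N.repr a).support, ∑ q ∈ (N.repr b).support,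
      (if p + q = z then N.repr a p * N.repr b q * ((Cc p q : ℤ) : F) else 0) := by
  have ha : a = ∑ p ∈ (N.repr a).support, N.repr a p • N p := by
    conv_lhs => rw [← Module.Basis.linearCombination_repr N a]
    rw [Finsupp.linearCombination_apply, Finsupp.sum]
  have hb : b = ∑ q ∈ (N.repr b).support, N.repr b q • N q := by
    conv_lhs => rw [← Module.Basis.linearCombination_repr N b]
    rw [Finsupp.linearCombination_apply, Finsupp.sum]
  have key : ⁅a, b⁆ = ∑ p ∈ (N.repr a).support, ∑ q ∈ (N.repr b).support,
      (N.repr a p * N.repr b q * ((Cc p q : ℤ) : F)) • N (p + q) := by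
    rw [Finset.sum_comm]
    conv_lhs => rw [← br_apply (F := F), hb]
    rw [map_sum]
    refine Finset.sum_congr rfl fun q hq => ?_
    rw [map_smul]
    conv_lhs => rw [ha]
    rw [map_sum, LinearMap.sum_apply, Finset.smul_sum]
    refine Finset.sum_congr rfl fun p hp => ?_
    rw [map_smul, LinearMap.smul_apply, br_apply, hN p q, smul_smul, smul_smul]
    congr 1
    ring
  rw [key, map_sum, Finsupp.finset_sum_apply]
  refine Finset.sum_congr rfl fun p hp => ?_
  rw [map_sum, Finsupp.finset_sum_apply]
  refine Finset.sum_congr rfl fun q hq => ?_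
  rw [map_smul, Module.Basis.repr_self, Finsupp.smul_apply, Finsupp.single_apply]
  by_cases h : p + q = z <;> simp [h]


/-- lexicographic order on indices -/
def lexLE (p q : ℤ × ℕ) : Prop := p.1 < q.1 ∨ (p.1 = q.1 ∧ p.2 ≤ q.2)

section
variable (N : Module.Basis (ℤ × ℕ) F B)
    (hN : ∀ p q : ℤ × ℕ, ⁅N p, N q⁆ = ((Cc p q : ℤ) : F) • N (p + q))
include hN

theorem repr_lie_right (a : B) (q p : ℤ × ℕ) :
    N.repr ⁅a, N q⁆ (p + q) = N.repr a p * ((Cc p q : ℤ) : F) := by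
  rw [repr_lie N hN, Module.Basis.repr_self]
  rw [Finsupp.support_single_ne_zero q one_ne_zero]
  have : ∀ p' : ℤ × ℕ, (∑ q' ∈ {q}, if p' + q' = p + q then
      N.repr a p' * (Finsupp.single q (1:F)) q' * ((Cc p' q' : ℤ) : F) else 0)
      = if p' = p then N.repr a p' * ((Cc p' q : ℤ) : F) else 0 := by
    intro p'
    rw [Finset.sum_singleton, Finsupp.single_eq_same]
    have : p' + q = p + q ↔ p' = p := by
      constructor
      · intro h; exact add_right_cancel h
      · rintro rfl; rfl
    by_cases h : p' = p <;> simp [this, h]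
  rw [Finset.sum_congr rfl fun p' _ => this p']
  rw [Finset.sum_ite_eq' ((N.repr a).support) p
    (fun p' => N.repr a p' * ((Cc p' q : ℤ) : F))]
  by_cases h : p ∈ (N.repr a).support
  · simp [h]
  · simp only [h, if_false]
    rw [Finsupp.notMem_support_iff.mp h, zero_mul]

theorem supp_lie_right (a : B) (q : ℤ × ℕ) :
    ∀ z ∈ (N.repr ⁅a, N q⁆).support, ∃ p ∈ (N.repr a).support, z = p + q := by
  intro z hz
  rw [Finsupp.mem_support_iff] at hz
  rw [repr_lie N hN, Module.Basis.repr_self,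
    Finsupp.support_single_ne_zero q one_ne_zero] at hz
  by_contra hcon
  push_neg at hcon
  refine hz (Finset.sum_eq_zero fun p hp => Finset.sum_eq_zero fun q' hq' => ?_)
  rw [Finset.mem_singleton] at hq'
  subst hq'
  rw [if_neg]
  intro h
  exact hcon p hp h.symm

theorem repr_lie_left (b : B) (q p : ℤ × ℕ) :
    N.repr ⁅N q, b⁆ (q + p) = N.repr b p * ((Cc q p : ℤ) : F) := by
  have h1 : ⁅N q, b⁆ = -⁅b, N q⁆ := by rw [← lie_skew]
  rw [h1, map_neg, Finsupp.neg_apply, add_comm q p, repr_lie_right N hN b q p]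
  have : Cc q p = - Cc p q := by simp only [Cc]; ring
  rw [this]
  push_cast
  ring

theorem supp_lie_left (b : B) (q : ℤ × ℕ) :
    ∀ z ∈ (N.repr ⁅N q, b⁆).support, ∃ p ∈ (N.repr b).support, z = q + p := by
  intro z hz
  have h1 : ⁅N q, b⁆ = -⁅b, N q⁆ := by rw [← lie_skew]
  rw [h1, map_neg, Finsupp.support_neg] at hz
  obtain ⟨p, hp, rfl⟩ := supp_lie_right N hN b q z hz
  exact ⟨p, hp, add_comm p q⟩

theorem top_bracket {a b : B} {pa pb : ℤ × ℕ}
    (ha : ∀ p ∈ (N.repr a).support, lexLE p pa)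
    (hb : ∀ p ∈ (N.repr b).support, lexLE p pb) :
    (∀ z ∈ (N.repr ⁅a, b⁆).support, lexLE z (pa + pb)) ∧
    N.repr ⁅a, b⁆ (pa + pb) = N.repr a pa * N.repr b pb * ((Cc pa pb : ℤ) : F) := by
  constructor
  · intro z hz
    rw [Finsupp.mem_support_iff, repr_lie N hN] at hz
    have : ∃ p ∈ (N.repr a).support, ∃ q ∈ (N.repr b).support, p + q = z := by
      by_contra hcon
      push_neg at hcon
      refine hz (Finset.sum_eq_zero fun p hp => Finset.sum_eq_zero fun q hq => ?_)
      rw [if_neg (hcon p hp q hq)]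
    obtain ⟨p, hp, q, hq, hpq⟩ := this
    have h1 := ha p hp
    have h2 := hb q hq
    subst hpq
    simp only [lexLE, Prod.fst_add, Prod.snd_add] at h1 h2 ⊢
    rcases h1 with h1 | ⟨h1, h1'⟩ <;> rcases h2 with h2 | ⟨h2, h2'⟩ <;> omega
  · rw [repr_lie N hN]
    rw [Finset.sum_eq_single pa (fun p hp hne => Finset.sum_eq_zero fun q hq => ?_)
      (fun hpa => Finset.sum_eq_zero fun q hq => ?_)]
    · rw [Finset.sum_eq_single pb (fun q hq hne => ?_) (fun hpb => ?_)]
      · rw [if_pos rfl]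
      · rw [if_neg]
        intro h
        exact hne (add_left_cancel h)
      · rw [Finsupp.notMem_support_iff.mp hpb, mul_zero, zero_mul, if_pos rfl]
    · -- p ∈ supp a, p ≠ pa: term zero
      rw [if_neg]
      intro h
      have h1 := ha p hp
      have h2 := hb q hq
      have hc : (p + q).1 = (pa + pb).1 ∧ (p + q).2 = (pa + pb).2 :=
        ⟨by rw [h], by rw [h]⟩
      simp only [lexLE, Prod.fst_add, Prod.snd_add] at h1 h2 hc
      have : p = pa := by
        rcases h1 with h1 | ⟨h1, h1'⟩ <;> rcases h2 with h2 | ⟨h2, h2'⟩ <;>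
          (refine Prod.ext ?_ ?_ <;> omega)
      exact hne this
    · rw [Finsupp.notMem_support_iff.mp hpa, zero_mul, zero_mul, ite_self]


/-- if support is contained in a singleton, the vector is a multiple of that basis vector -/
theorem eq_smul_of_supp_subset (v : B) (q : ℤ × ℕ)
    (h : ∀ p ∈ (N.repr v).support, p = q) : v = (N.repr v q) • N q := by
  have : N.repr v = Finsupp.single q (N.repr v q) := by
    ext p
    rw [Finsupp.single_apply]
    by_cases hp : p = q
    · subst hp; simp
    · rw [if_neg fun hh => hp hh.symm]
      by_contra hc
      exact hp (h p (Finsupp.mem_support_iff.mpr hc))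
  conv_lhs => rw [← Module.Basis.linearCombination_repr N v, this]
  simp

theorem repr_lie_e (w : B) (p : ℤ × ℕ) :
    N.repr ⁅N 0, w⁆ p = ((-p.1 : ℤ) : F) * N.repr w p := by
  have h := repr_lie_left N hN w 0 p
  rw [zero_add] at h
  rw [h]
  have : Cc 0 p = -p.1 := by simp [Cc]
  rw [this]
  push_cast
  ring

end

section Flip
variable (N : Module.Basis (ℤ × ℕ) F B)
    (hN : ∀ p q : ℤ × ℕ, ⁅N p, N q⁆ = ((Cc p q : ℤ) : F) • N (p + q))

/-- index flip -/
def neg1 (p : ℤ × ℕ) : ℤ × ℕ := (-p.1, p.2)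

noncomputable def flipLin : B →ₗ[F] B := Module.Basis.constr N F (fun p => -N (neg1 p))

@[simp] lemma flipLin_basis (p : ℤ × ℕ) : flipLin N (N p) = -N (neg1 p) :=
  Module.Basis.constr_basis N F _ p

lemma flipLin_invol (x : B) : flipLin N (flipLin N x) = x := by
  have : (flipLin N (F := F)) ∘ₗ (flipLin N (F := F)) = LinearMap.id := by
    refine Module.Basis.ext N fun p => ?_
    simp [neg1]
  calc flipLin N (flipLin N x) = ((flipLin N (F := F)) ∘ₗ (flipLin N (F := F))) x := rfl
  _ = x := by rw [this]; rfl

/-- the flip automorphism -/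
noncomputable def flipE : B ≃ₗ[F] B :=
  LinearEquiv.ofLinear (flipLin N) (flipLin N)
    (by ext x; exact flipLin_invol N x) (by ext x; exact flipLin_invol N x)

@[simp] lemma flipE_basis (p : ℤ × ℕ) : flipE N (N p) = -N (neg1 p) := flipLin_basis N p

include hN in
lemma flipE_lie (x y : B) : flipE N ⁅x, y⁆ = ⁅flipE N x, flipE N y⁆ := by
  have h : ∀ p q : ℤ × ℕ, flipE N ⁅N p, N q⁆ = ⁅flipE N (N p), flipE N (N q)⁆ := by
    intro p q
    rw [hN p q, map_smul, flipE_basis, flipE_basis, flipE_basis, neg_lie, lie_neg, neg_neg,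
      hN (neg1 p) (neg1 q)]
    have h1 : Cc (neg1 p) (neg1 q) = -Cc p q := by simp [Cc, neg1]; ring
    have h2 : neg1 p + neg1 q = neg1 (p + q) := by
      refine Prod.ext ?_ ?_
      · simp only [neg1, Prod.fst_add]
        ring
      · simp only [neg1, Prod.snd_add]
    rw [h1, h2]
    push_cast
    rw [smul_neg, ← neg_smul]
  -- extend bilinearly
  let m1 : B →ₗ[F] B →ₗ[F] B :=
    LinearMap.mk₂ F (fun x y => flipE N ⁅x, y⁆)
      (fun x x' y => by simp [add_lie]) (fun c x y => by simp [smul_lie])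
      (fun x y y' => by simp [lie_add]) (fun c x y => by simp [lie_smul])
  let m2 : B →ₗ[F] B →ₗ[F] B :=
    LinearMap.mk₂ F (fun x y => ⁅flipE N x, flipE N y⁆)
      (fun x x' y => by simp [add_lie]) (fun c x y => by simp [smul_lie])
      (fun x y y' => by simp [lie_add]) (fun c x y => by simp [lie_smul])
  have hm : m1 = m2 := LinearMap.ext_basis N N h
  have := LinearMap.congr_fun (LinearMap.congr_fun hm x) y
  simpa [m1, m2] using this

@[simp] lemma repr_flipE (v : B) (p : ℤ × ℕ) :
    N.repr (flipE N v) p = -(N.repr v (neg1 p)) := by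
  have hv : v = ∑ q ∈ (N.repr v).support, N.repr v q • N q := by
    conv_lhs => rw [← Module.Basis.linearCombination_repr N v]
    rw [Finsupp.linearCombination_apply, Finsupp.sum]
  conv_lhs => rw [hv]
  rw [map_sum, map_sum, Finsupp.finset_sum_apply]
  conv_rhs => rw [hv]
  rw [map_sum, Finsupp.finset_sum_apply, ← Finset.sum_neg_distrib]
  refine Finset.sum_congr rfl fun q hq => ?_
  simp only [map_smul, map_neg, flipE_basis, Module.Basis.repr_self, Finsupp.smul_apply,
    Finsupp.neg_apply, Finsupp.single_apply, smul_eq_mul, smul_neg]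
  have hiff : neg1 q = p ↔ q = neg1 p := by
    simp only [neg1, Prod.ext_iff]
    omega
  by_cases hqp : q = neg1 p
  · rw [if_pos (hiff.mpr hqp), if_pos hqp]
    try ring
  · rw [if_neg (fun hh => hqp (hiff.mp hh)), if_neg hqp]
    try ring

end Flip

section Step1
variable (N : Module.Basis (ℤ × ℕ) F B)
    (hN : ∀ p q : ℤ × ℕ, ⁅N p, N q⁆ = ((Cc p q : ℤ) : F) • N (p + q))

/-- iterated bracketing by `e = N 0` -/
noncomputable def dIter (k : ℕ) (w : B) : B := (fun v => ⁅N 0, v⁆)^[k] w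

@[simp] lemma dIter_zero (w : B) : dIter N 0 w = w := rfl

lemma dIter_succ (k : ℕ) (w : B) : dIter N (k + 1) w = ⁅N 0, dIter N k w⁆ :=
  Function.iterate_succ_apply' _ k w

include hN

lemma repr_dIter (k : ℕ) (w : B) (p : ℤ × ℕ) :
    N.repr (dIter N k w) p = (((-p.1) ^ k : ℤ) : F) * N.repr w p := by
  induction k with
  | zero => simp
  | succ k ih =>
    rw [dIter_succ, repr_lie_e N hN, ih]
    push_cast
    ring

lemma killing (w : B) (P : Polynomial F)
    (hP : ∀ p ∈ (N.repr w).support, P.eval ((-p.1 : ℤ) : F) = 0) (k : ℕ) :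
    ∑ r ∈ Finset.range (P.natDegree + 1), P.coeff r • dIter N (k + r) w = 0 := by
  apply N.repr.injective
  rw [map_zero]
  ext p
  rw [map_sum, Finsupp.finset_sum_apply, Finsupp.zero_apply]
  have hterm : ∀ r, N.repr (P.coeff r • dIter N (k + r) w) p
      = N.repr w p * ((-p.1 : ℤ) : F) ^ k * (P.coeff r * ((-p.1 : ℤ) : F) ^ r) := by
    intro r
    rw [map_smul, Finsupp.smul_apply, repr_dIter N hN, smul_eq_mul]
    push_cast
    ring
  rw [Finset.sum_congr rfl fun r _ => hterm r, ← Finset.mul_sum]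
  by_cases hw : N.repr w p = 0
  · rw [hw, zero_mul, zero_mul]
  · have : ∑ r ∈ Finset.range (P.natDegree + 1), P.coeff r * ((-p.1 : ℤ) : F) ^ r
        = P.eval ((-p.1 : ℤ) : F) := by rw [Polynomial.eval_eq_sum_range]
    rw [this, hP p (Finsupp.mem_support_iff.mpr hw), mul_zero]

omit hN in
lemma exists_killer (w : B) : ∃ P : Polynomial F, P.Monic ∧
    ∀ p ∈ (N.repr w).support, P.eval ((-p.1 : ℤ) : F) = 0 := by
  refine ⟨∏ y ∈ (N.repr w).support.image Prod.fst, (Polynomial.X + Polynomial.C ((y : ℤ) : F)),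
    Polynomial.monic_prod_of_monic _ _ (fun y _ => Polynomial.monic_X_add_C _), ?_⟩
  intro p hp
  rw [Polynomial.eval_prod]
  refine Finset.prod_eq_zero (Finset.mem_image_of_mem Prod.fst hp) ?_
  simp

theorem main_core (φ : B ≃ₗ[F] B) (hφ : ∀ x y : B, φ ⁅x, y⁆ = ⁅φ x, φ y⁆)
    (pa : ℤ × ℕ)
    (hTop : ∀ p ∈ (N.repr (φ (N 0))).support, lexLE p pa)
    (hpa : N.repr (φ (N 0)) pa ≠ 0)
    (pb : ℤ × ℕ)
    (hC : ∀ k : ℕ, Cc pa (pb.1 + k * pa.1, pb.2 + k * pa.2) ≠ 0)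
    (hpos : 0 < pa.1 ∨ (pa.1 = 0 ∧ 0 < pa.2)) : False := by
  classical
  set w := φ.symm (N pb) with hw
  set vk : ℕ → B := fun k => φ (dIter N k w) with hvk
  set pk : ℕ → ℤ × ℕ := fun k => (pb.1 + k * pa.1, pb.2 + k * pa.2) with hpk
  have hvk0 : vk 0 = N pb := by simp [hvk, hw]
  have hvkS : ∀ k, vk (k + 1) = ⁅φ (N 0), vk k⁆ := by
    intro k
    rw [hvk]
    simp only
    rw [dIter_succ, hφ]
  have hpkS : ∀ k, pa + pk k = pk (k + 1) := by
    intro k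
    refine Prod.ext ?_ ?_
    · simp only [hpk, Prod.fst_add]
      push_cast
      ring
    · simp only [hpk, Prod.snd_add]
      ring
  have inv : ∀ k, (∀ z ∈ (N.repr (vk k)).support, lexLE z (pk k)) ∧
      N.repr (vk k) (pk k) ≠ 0 := by
    intro k
    induction k with
    | zero =>
      have hpk0 : pk 0 = pb := by
        refine Prod.ext ?_ ?_ <;> simp [hpk]
      rw [hvk0, hpk0, Module.Basis.repr_self]
      constructor
      · intro z hz
        rw [Finsupp.support_single_ne_zero pb one_ne_zero, Finset.mem_singleton] at hz
        subst hz
        right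
        exact ⟨rfl, le_refl _⟩
      · simp
    | succ k ih =>
      have h := top_bracket N hN (a := φ (N 0)) (b := vk k) hTop ih.1
      rw [hpkS k] at h
      refine ⟨by rw [hvkS k]; exact h.1, ?_⟩
      rw [hvkS k, h.2]
      exact mul_ne_zero (mul_ne_zero hpa ih.2) (Int.cast_ne_zero.mpr (hC k))
  obtain ⟨P, hmonic, hkill⟩ := exists_killer N w
  have hK := killing N hN w P hkill 0
  set n := P.natDegree with hn
  have hK2 : ∑ r ∈ Finset.range (n + 1), P.coeff r • vk r = 0 := by
    have := congrArg φ hK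
    rw [map_zero, map_sum] at this
    rw [← this]
    refine Finset.sum_congr rfl fun r _ => ?_
    rw [map_smul, zero_add]
  have hK3 := congrArg (fun v => N.repr v (pk n)) hK2
  rw [map_sum, map_zero, Finsupp.finset_sum_apply, Finsupp.zero_apply, Finset.sum_range_succ] at hK3
  have hzero : ∀ r ∈ Finset.range n, N.repr (P.coeff r • vk r) (pk n) = 0 := by
    intro r hr
    rw [Finset.mem_range] at hr
    rw [map_smul, Finsupp.smul_apply]
    have : N.repr (vk r) (pk n) = 0 := by
      by_contra hne
      have hmem := (inv r).1 (pk n) (Finsupp.mem_support_iff.mpr hne)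
      -- pk n is strictly bigger than pk r in lex order
      rcases hpos with h1 | ⟨h1, h2⟩
      · have hlt : (r : ℤ) * pa.1 < (n : ℤ) * pa.1 :=
          mul_lt_mul_of_pos_right (by exact_mod_cast hr) h1
        rcases hmem with hm | ⟨hm, _⟩
        · simp only [hpk] at hm
          linarith
        · simp only [hpk] at hm
          linarith
      · have hlt : r * pa.2 < n * pa.2 := (Nat.mul_lt_mul_right h2).mpr hr
        rcases hmem with hm | ⟨hm, hm2⟩
        · simp only [hpk, h1] at hm
          omega
        · simp only [hpk, h1] at hm hm2
          omega
    rw [this, smul_zero]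
  rw [Finset.sum_eq_zero hzero, zero_add, map_smul, Finsupp.smul_apply,
    Polynomial.Monic.coeff_natDegree hmonic, one_smul] at hK3
  exact (inv n).2 hK3


theorem step1 (φ : B ≃ₗ[F] B) (hφ : ∀ x y : B, φ ⁅x, y⁆ = ⁅φ x, φ y⁆) :
    ∀ p ∈ (N.repr (φ (N 0))).support, p.1 < 0 ∨ p = 0 := by
  classical
  intro p hp
  by_contra hcon
  push_neg at hcon
  obtain ⟨hp1, hp0⟩ := hcon
  -- support is nonempty; build the lex-maximal element
  set s := (N.repr (φ (N 0))).support with hs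
  have hsne : s.Nonempty := ⟨p, hp⟩
  have h1ne : (s.image Prod.fst).Nonempty := hsne.image _
  set m1 := (s.image Prod.fst).max' h1ne with hm1
  set sfil := s.filter (fun q => q.1 = m1) with hsfil
  have hm1mem : m1 ∈ s.image Prod.fst := (s.image Prod.fst).max'_mem h1ne
  obtain ⟨q0, hq0s, hq01⟩ := Finset.mem_image.mp hm1mem
  have hfilne : (sfil.image Prod.snd).Nonempty :=
    ⟨q0.2, Finset.mem_image_of_mem _ (Finset.mem_filter.mpr ⟨hq0s, hq01⟩)⟩
  set m2 := (sfil.image Prod.snd).max' hfilne with hm2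
  have hTop : ∀ q ∈ s, lexLE q (m1, m2) := by
    intro q hq
    have hle : q.1 ≤ m1 := Finset.le_max' _ _ (Finset.mem_image_of_mem _ hq)
    rcases lt_or_eq_of_le hle with h | h
    · exact Or.inl h
    · refine Or.inr ⟨h, ?_⟩
      exact Finset.le_max' _ _ (Finset.mem_image_of_mem _ (Finset.mem_filter.mpr ⟨hq, h⟩))
  have hpamem : (m1, m2) ∈ s := by
    obtain ⟨q1, hq1, hq12⟩ := Finset.mem_image.mp ((sfil.image Prod.snd).max'_mem hfilne)
    have := Finset.mem_filter.mp hq1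
    have hq1eq : q1 = (m1, m2) := Prod.ext this.2 hq12
    exact hq1eq ▸ this.1
  have hpa : N.repr (φ (N 0)) (m1, m2) ≠ 0 := Finsupp.mem_support_iff.mp hpamem
  have hm1nn : 0 ≤ m1 := le_trans hp1 (Finset.le_max' _ _ (Finset.mem_image_of_mem _ hp))
  rcases lt_or_eq_of_le hm1nn with hm1pos | hm1zero
  · -- m1 > 0 : contradiction via main_core with pb = (m1+1, 0)
    refine main_core N hN φ hφ (m1, m2) hTop hpa (m1 + 1, 0) ?_ (Or.inl hm1pos)
    intro k
    have hexp : Cc (m1, m2) ((m1 + 1, 0).1 + (k : ℤ) * m1, (m1 + 1, 0).2 + k * m2)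
        = -((m1 * m2 + m2 + 1) + (k : ℤ) * m1) := by
      simp only [Cc]
      push_cast
      ring
    rw [hexp]
    have h1 : 0 ≤ m1 * (m2 : ℤ) := mul_nonneg (le_of_lt hm1pos) (by positivity)
    have h2 : 0 ≤ (k : ℤ) * m1 := mul_nonneg (by positivity) (le_of_lt hm1pos)
    intro hc
    have : (m1 * m2 + m2 + 1) + (k : ℤ) * m1 = 0 := by linarith [neg_eq_zero.mp hc]
    have h3 : (0 : ℤ) ≤ m2 := by positivity
    linarith
  · -- m1 = 0 : then p = (0, p.2) with p.2 > 0, so m2 > 0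
    have hp1' : p.1 = 0 := le_antisymm (hm1zero ▸ Finset.le_max' _ _
      (Finset.mem_image_of_mem _ hp)) hp1
    have hp2 : 0 < p.2 := by
      rcases Nat.eq_zero_or_pos p.2 with h | h
      · exact absurd (Prod.ext hp1' h) hp0
      · exact h
    have hm2pos : 0 < m2 := by
      have : p.2 ≤ m2 := Finset.le_max' _ _ (Finset.mem_image_of_mem _
        (Finset.mem_filter.mpr ⟨hp, by rw [hp1', hm1zero]⟩))
      omega
    refine main_core N hN φ hφ (m1, m2) hTop hpa (1, 0) ?_ (Or.inr ⟨hm1zero.symm, hm2pos⟩)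
    intro k
    have hexp : Cc (m1, m2) ((1, 0).1 + (k : ℤ) * m1, (1, 0).2 + k * m2)
        = -((m2 : ℤ) + 1) := by
      rw [← hm1zero]
      simp only [Cc]
      push_cast
      ring
    rw [hexp]
    omega

theorem phi_e_smul (φ : B ≃ₗ[F] B) (hφ : ∀ x y : B, φ ⁅x, y⁆ = ⁅φ x, φ y⁆) :
    ∃ c : F, c ≠ 0 ∧ φ (N 0) = c • N 0 := by
  classical
  have h1 := step1 N hN φ hφ
  -- compose with the flip
  set φ2 : B ≃ₗ[F] B := φ.trans (flipE N) with hφ2def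
  have hφ2 : ∀ x y : B, φ2 ⁅x, y⁆ = ⁅φ2 x, φ2 y⁆ := by
    intro x y
    simp only [hφ2def, LinearEquiv.trans_apply]
    rw [hφ, flipE_lie N hN]
  have h2 := step1 N hN φ2 hφ2
  have hsupp : ∀ q ∈ (N.repr (φ (N 0))).support, q = 0 := by
    intro q hq
    rcases h1 q hq with hq1 | hq1
    · exfalso
      have hmem : neg1 q ∈ (N.repr (φ2 (N 0))).support := by
        rw [Finsupp.mem_support_iff]
        simp only [hφ2def, LinearEquiv.trans_apply]
        rw [repr_flipE]
        have : neg1 (neg1 q) = q := by simp [neg1]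
        rw [this]
        simpa using Finsupp.mem_support_iff.mp hq
      rcases h2 (neg1 q) hmem with hh | hh
      · simp only [neg1] at hh
        omega
      · have : q.1 = 0 := by
          have := congrArg Prod.fst hh
          simp only [neg1, Prod.fst_zero] at this
          omega
        omega
    · exact hq1
  refine ⟨N.repr (φ (N 0)) 0, ?_, ?_⟩
  · intro hc
    have hz : φ (N 0) = 0 := by
      have := eq_smul_of_supp_subset N hN (φ (N 0)) 0 hsupp
      rw [hc, zero_smul] at this
      exact this
    exact (N.ne_zero 0) (φ.injective (by rw [hz, map_zero]))
  · exact eq_smul_of_supp_subset N hN (φ (N 0)) 0 hsupp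

lemma symm_lie (φ : B ≃ₗ[F] B) (hφ : ∀ x y : B, φ ⁅x, y⁆ = ⁅φ x, φ y⁆) :
    ∀ x y : B, φ.symm ⁅x, y⁆ = ⁅φ.symm x, φ.symm y⁆ := by
  intro x y
  apply φ.injective
  rw [hφ, φ.apply_symm_apply, φ.apply_symm_apply, φ.apply_symm_apply]

/-- eigenvalue transport: if `φ e = c • e` then `c * q.1 = p.1` for every `q` in the
support of `φ (N p)`. -/
lemma eigen_transport (φ : B ≃ₗ[F] B) (hφ : ∀ x y : B, φ ⁅x, y⁆ = ⁅φ x, φ y⁆)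
    {c : F} (hc : φ (N 0) = c • N 0) (p : ℤ × ℕ) :
    ∀ q ∈ (N.repr (φ (N p))).support, c * ((q.1 : ℤ) : F) = ((p.1 : ℤ) : F) := by
  intro q hq
  have key : φ ⁅N 0, N p⁆ = ⁅c • N 0, φ (N p)⁆ := by rw [hφ, hc]
  have h0p : ⁅N 0, N p⁆ = ((-p.1 : ℤ) : F) • N p := by
    rw [hN 0 p]
    have : Cc 0 p = -p.1 := by simp [Cc]
    rw [this, zero_add]
  rw [h0p, map_smul, smul_lie] at key
  -- coefficientwise at q
  have hcoeff := congrArg (fun v => N.repr v q) key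
  simp only [map_smul, Finsupp.smul_apply, smul_eq_mul] at hcoeff
  rw [repr_lie_e N hN] at hcoeff
  have hqne := Finsupp.mem_support_iff.mp hq
  have h2 : (((-p.1 : ℤ) : F) - c * ((-q.1 : ℤ) : F)) * (N.repr (φ (N p))) q = 0 := by
    linear_combination hcoeff
  rcases mul_eq_zero.mp h2 with h | h
  · have h3 := sub_eq_zero.mp h
    push_cast at h3
    linear_combination h3
  · exact absurd h hqne

theorem phi_e_sign (φ : B ≃ₗ[F] B) (hφ : ∀ x y : B, φ ⁅x, y⁆ = ⁅φ x, φ y⁆) :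
    ∃ ξ : ℤ, (ξ = 1 ∨ ξ = -1) ∧ φ (N 0) = ((ξ : ℤ) : F) • N 0 := by
  classical
  obtain ⟨c, hcne, hc⟩ := phi_e_smul N hN φ hφ
  obtain ⟨c', hcne', hc'⟩ := phi_e_smul N hN φ.symm (symm_lie N hN φ hφ)
  -- c * c' = 1
  have hcc' : c' * c = 1 := by
    have : N 0 = φ.symm (φ (N 0)) := (φ.symm_apply_apply _).symm
    rw [hc, map_smul, hc', smul_smul] at this
    have h2 : (1 : F) • N 0 = (c * c') • N 0 := by rw [one_smul]; exact this
    have := smul_left_injective F (N.ne_zero 0) h2.symm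
    rw [mul_comm] at this
    exact this
  -- eigenvalue integrality: some q with c * q.1 = 1   (p = (1,0))
  have hsupp1 : (N.repr (φ (N (1, 0)))).support.Nonempty := by
    rw [Finsupp.support_nonempty_iff]
    intro hz
    have : φ (N (1,0)) = 0 := by
      apply N.repr.injective
      rw [map_zero]
      exact hz
    exact (N.ne_zero (1,0)) (φ.injective (by rw [this, map_zero]))
  obtain ⟨q, hq⟩ := hsupp1
  have hd := eigen_transport N hN φ hφ hc (1, 0) q hq
  obtain ⟨q', hq'⟩ : (N.repr (φ.symm (N (1, 0)))).support.Nonempty := by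
    rw [Finsupp.support_nonempty_iff]
    intro hz
    have : φ.symm (N (1,0)) = 0 := by
      apply N.repr.injective
      rw [map_zero]
      exact hz
    exact (N.ne_zero (1,0)) (φ.symm.injective (by rw [this, map_zero]))
  have hd' := eigen_transport N hN φ.symm (symm_lie N hN φ hφ) hc' (1, 0) q' hq'
  -- hd : c * q.1 = 1, hd' : c' * q'.1 = 1
  simp only [Int.cast_one] at hd hd'
  -- c = 1 / q.1-cast: so c' = q.1-cast. and c' * q'.1 = 1: q.1 * q'.1 = 1 in ℤ.
  have hq1ne : ((q.1 : ℤ) : F) ≠ 0 := by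
    intro h
    rw [h, mul_zero] at hd
    exact one_ne_zero hd.symm
  have hcinv : c' = ((q.1 : ℤ) : F) := by
    have h1 : c = ((q.1 : ℤ) : F)⁻¹ := by field_simp; linear_combination hd
    rw [h1] at hcc'
    field_simp at hcc'
    exact hcc'
  rw [hcinv] at hd'
  have : ((q.1 * q'.1 : ℤ) : F) = ((1 : ℤ) : F) := by push_cast; linear_combination hd'
  have hint : q.1 * q'.1 = 1 := Int.cast_injective this
  have hcases : q.1 = 1 ∨ q.1 = -1 := Int.eq_one_or_neg_one_of_mul_eq_one hint
  have hcq : c = ((q'.1 : ℤ) : F) := by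
    rcases hcases with h | h
    · have h' : q'.1 = 1 := by rw [h, one_mul] at hint; exact hint
      rw [h] at hd
      rw [h']
      push_cast at hd ⊢
      linear_combination hd
    · have h' : q'.1 = -1 := by rw [h] at hint; omega
      rw [h] at hd
      rw [h']
      push_cast at hd ⊢
      linear_combination -hd
  refine ⟨q'.1, ?_, by rw [hc, hcq]⟩
  rcases hcases with h | h
  · left; rw [h, one_mul] at hint; exact hint
  · right; rw [h] at hint; omega

end Step1

section Final
variable (N : Module.Basis (ℤ × ℕ) F B)
    (hN : ∀ p q : ℤ × ℕ, ⁅N p, N q⁆ = ((Cc p q : ℤ) : F) • N (p + q))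

omit hN in
lemma exists_lexmax (v : B) (hv : v ≠ 0) :
    ∃ pa ∈ (N.repr v).support, ∀ q ∈ (N.repr v).support, lexLE q pa := by
  classical
  set s := (N.repr v).support with hs
  have hsne : s.Nonempty := by
    rw [hs, Finsupp.support_nonempty_iff]
    intro hz
    exact hv (by apply N.repr.injective; rw [map_zero]; exact hz)
  have h1ne : (s.image Prod.fst).Nonempty := hsne.image _
  set m1 := (s.image Prod.fst).max' h1ne with hm1
  set sfil := s.filter (fun q => q.1 = m1) with hsfil
  obtain ⟨q0, hq0s, hq01⟩ := Finset.mem_image.mp ((s.image Prod.fst).max'_mem h1ne)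
  have hfilne : (sfil.image Prod.snd).Nonempty :=
    ⟨q0.2, Finset.mem_image_of_mem _ (Finset.mem_filter.mpr ⟨hq0s, hq01⟩)⟩
  set m2 := (sfil.image Prod.snd).max' hfilne with hm2
  have hpamem : (m1, m2) ∈ s := by
    obtain ⟨q1, hq1, hq12⟩ := Finset.mem_image.mp ((sfil.image Prod.snd).max'_mem hfilne)
    have := Finset.mem_filter.mp hq1
    exact (Prod.ext this.2 hq12 : q1 = (m1, m2)) ▸ this.1
  refine ⟨(m1, m2), hpamem, fun q hq => ?_⟩
  have hle : q.1 ≤ m1 := Finset.le_max' _ _ (Finset.mem_image_of_mem _ hq)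
  rcases lt_or_eq_of_le hle with h | h
  · exact Or.inl h
  · exact Or.inr ⟨h, Finset.le_max' _ _
      (Finset.mem_image_of_mem _ (Finset.mem_filter.mpr ⟨hq, h⟩))⟩

variable (φ : B ≃ₗ[F] B) (hφ : ∀ x y : B, φ ⁅x, y⁆ = ⁅φ x, φ y⁆)

omit hN in
lemma phi_ne (p : ℤ × ℕ) : φ (N p) ≠ 0 := fun h =>
  (N.ne_zero p) (φ.injective (by rw [h, map_zero]))

omit hN in
lemma coeff_ne_zero {c : F} {p : ℤ × ℕ} (h : φ (N p) = c • N p) : c ≠ 0 := by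
  intro hc
  rw [hc, zero_smul] at h
  exact phi_ne N φ p h

include hN hφ

/-- with `φ e = e`, supports live on the expected horizontal line. -/
lemma supp_fst (hee : φ (N 0) = N 0) (p : ℤ × ℕ) :
    ∀ q ∈ (N.repr (φ (N p))).support, q.1 = p.1 := by
  intro q hq
  have h := eigen_transport N hN φ hφ (c := 1) (by rw [hee, one_smul]) p q hq
  rw [one_mul] at h
  exact_mod_cast h

/-- Step 5a : `φ (N (1,0)) = μ • N (1,0)` and `φ (N (-1,0)) = μ⁻¹ • N (-1,0)`. -/
lemma step5a (hee : φ (N 0) = N 0) :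
    ∃ μ : F, μ ≠ 0 ∧ φ (N (1, 0)) = μ • N (1, 0) ∧ φ (N (-1, 0)) = μ⁻¹ • N (-1, 0) := by
  classical
  obtain ⟨pa, hpas, hpa⟩ := exists_lexmax N (φ (N (1, 0))) (phi_ne N φ _)
  obtain ⟨pb, hpbs, hpb⟩ := exists_lexmax N (φ (N (-1, 0))) (phi_ne N φ _)
  have hpa1 : pa.1 = 1 := supp_fst N hN φ hφ hee (1, 0) pa hpas
  have hpb1 : pb.1 = -1 := supp_fst N hN φ hφ hee (-1, 0) pb hpbs
  -- the bracket is 2 e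
  have hbr : ⁅φ (N (1, 0)), φ (N (-1, 0))⁆ = (2 : F) • N 0 := by
    rw [← hφ, hN]
    have h1 : Cc (1, 0) (-1, 0) = 2 := by simp [Cc]
    have h2 : ((1 : ℤ), (0 : ℕ)) + (-1, 0) = 0 := by
      refine Prod.ext ?_ ?_ <;> simp
    rw [h1, h2, map_smul, hee]
    norm_num
  have htop := top_bracket N hN (a := φ (N (1, 0))) (b := φ (N (-1, 0))) hpa hpb
  -- the top coefficient is nonzero
  have hCne : ((Cc pa pb : ℤ) : F) ≠ 0 := by
    rw [Int.cast_ne_zero]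
    simp only [Cc, hpa1, hpb1]
    have : (0 : ℤ) ≤ (pb.2 : ℤ) := by positivity
    have : (0 : ℤ) ≤ (pa.2 : ℤ) := by positivity
    omega
  have hne : N.repr ⁅φ (N (1, 0)), φ (N (-1, 0))⁆ (pa + pb) ≠ 0 := by
    rw [htop.2]
    exact mul_ne_zero (mul_ne_zero (Finsupp.mem_support_iff.mp hpas)
      (Finsupp.mem_support_iff.mp hpbs)) hCne
  -- hence pa + pb = (0,0), so pa.2 = pb.2 = 0
  have hsum : pa + pb = 0 := by
    by_contra hcon
    apply hne
    rw [hbr, map_smul, Finsupp.smul_apply, Module.Basis.repr_self, Finsupp.single_apply,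
      if_neg (fun h => hcon h.symm), smul_zero]
  have hsnd : pa.2 + pb.2 = 0 := by
    have := congrArg Prod.snd hsum
    simpa using this
  have hpa2 : pa.2 = 0 := by omega
  have hpb2 : pb.2 = 0 := by omega
  have hpaeq : pa = (1, 0) := Prod.ext hpa1 hpa2
  have hpbeq : pb = (-1, 0) := Prod.ext hpb1 hpb2
  -- so the supports are singletons
  have hsupa : ∀ q ∈ (N.repr (φ (N (1, 0)))).support, q = (1, 0) := by
    intro q hq
    have h1 := supp_fst N hN φ hφ hee (1, 0) q hq
    have h2 := hpa q hq
    rw [hpaeq] at h2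
    rcases h2 with h | ⟨_, h⟩
    · exfalso; rw [h1] at h; exact absurd h (lt_irrefl _)
    · exact Prod.ext h1 (Nat.le_zero.mp h)
  have hsupb : ∀ q ∈ (N.repr (φ (N (-1, 0)))).support, q = (-1, 0) := by
    intro q hq
    have h1 := supp_fst N hN φ hφ hee (-1, 0) q hq
    have h2 := hpb q hq
    rw [hpbeq] at h2
    rcases h2 with h | ⟨_, h⟩
    · exfalso; rw [h1] at h; exact absurd h (lt_irrefl _)
    · exact Prod.ext h1 (Nat.le_zero.mp h)
  have hfa := eq_smul_of_supp_subset N hN (φ (N (1, 0))) (1, 0) hsupa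
  have hfb := eq_smul_of_supp_subset N hN (φ (N (-1, 0))) (-1, 0) hsupb
  set μ := N.repr (φ (N (1, 0))) (1, 0) with hμdef
  set μ' := N.repr (φ (N (-1, 0))) (-1, 0) with hμ'def
  have hμne : μ ≠ 0 := coeff_ne_zero N φ hfa
  have hμ'ne : μ' ≠ 0 := coeff_ne_zero N φ hfb
  -- μ * μ' = 1 from hbr
  have hmul : μ * μ' = 1 := by
    have h2 : ((1 : ℤ), (0 : ℕ)) + (-1, 0) = 0 := by
      refine Prod.ext ?_ ?_ <;> simp
    have := hbr
    rw [hfa, hfb, smul_lie, lie_smul, hN, h2] at this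
    have h1 : Cc (1, 0) (-1, 0) = 2 := by simp [Cc]
    rw [h1] at this
    have h3 : (μ * (μ' * ((2 : ℤ) : F))) • N 0 = (2 : F) • N 0 := by
      rw [← smul_smul, ← smul_smul]; exact this
    have h4 := smul_left_injective F (N.ne_zero 0) h3
    push_cast at h4
    linear_combination h4 / 2
  refine ⟨μ, hμne, hfa, ?_⟩
  have : μ' = μ⁻¹ := by field_simp; linear_combination hmul
  rw [← this]
  exact hfb


lemma phi_rel (p q : ℤ × ℕ) :
    ⁅φ (N p), φ (N q)⁆ = ((Cc p q : ℤ) : F) • φ (N (p + q)) := by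
  rw [← hφ, hN, map_smul]

omit hN hφ in
lemma idxp (y x : ℤ) (l j : ℕ) : ((y, l) : ℤ × ℕ) + (x, j) = (y + x, l + j) := rfl

variable {μ : F}

lemma stepUP {y : ℤ} (hy : y ≠ 1) {c : F} (hf : φ (N (1, 0)) = μ • N (1, 0))
    (hc : φ (N (y, 0)) = c • N (y, 0)) : φ (N (y + 1, 0)) = (μ * c) • N (y + 1, 0) := by
  have h := phi_rel N hN φ hφ (y, 0) (1, 0)
  rw [hc, hf, smul_lie, lie_smul, hN, idxp] at h
  have hC : Cc (y, 0) (1, 0) = y - 1 := by simp only [Cc]; push_cast; ring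
  rw [hC] at h
  have hcast : ((y - 1 : ℤ) : F) ≠ 0 := Int.cast_ne_zero.mpr (by omega)
  apply smul_right_injective B hcast
  simp only
  rw [← h, smul_smul, smul_smul, smul_smul]
  congr 1
  ring

lemma stepDOWN {y : ℤ} (hy : y ≠ -1) {c : F} (hμ : μ ≠ 0)
    (hg : φ (N (-1, 0)) = μ⁻¹ • N (-1, 0))
    (hc : φ (N (y, 0)) = c • N (y, 0)) : φ (N (y - 1, 0)) = (μ⁻¹ * c) • N (y - 1, 0) := by
  have h := phi_rel N hN φ hφ (y, 0) (-1, 0)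
  rw [hc, hg, smul_lie, lie_smul, hN, idxp] at h
  have hC : Cc (y, 0) (-1, 0) = y + 1 := by simp only [Cc]; push_cast; ring
  have hidx : ((y + -1 : ℤ), (0 + 0 : ℕ)) = ((y - 1 : ℤ), (0 : ℕ)) := by
    refine Prod.ext ?_ ?_ <;> simp <;> ring
  rw [hC, hidx] at h
  have hcast : ((y + 1 : ℤ) : F) ≠ 0 := Int.cast_ne_zero.mpr (by omega)
  apply smul_right_injective B hcast
  simp only
  rw [← h, smul_smul, smul_smul, smul_smul]
  congr 1
  ring

/-- Step 5b shape lemma, ascending chain: for `y ∉ {1, -2}`,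
`φ (N (y,0))` is a multiple of `N (y,0)`. -/
lemma shapeA (hee : φ (N 0) = N 0) (hμ : μ ≠ 0) (hf : φ (N (1, 0)) = μ • N (1, 0))
    (hg : φ (N (-1, 0)) = μ⁻¹ • N (-1, 0)) (y : ℤ) (hy1 : y ≠ 1) (hy2 : y ≠ -2) :
    φ (N (y, 0)) = (N.repr (φ (N (y, 0))) (y, 0)) • N (y, 0) := by
  have hfst := supp_fst N hN φ hφ hee (y, 0)
  have e1 : μ • ⁅φ (N (y, 0)), N (1, 0)⁆ = ((y - 1 : ℤ) : F) • φ (N (y + 1, 0)) := by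
    have h := phi_rel N hN φ hφ (y, 0) (1, 0)
    rw [idxp] at h
    have hC : Cc (y, 0) (1, 0) = y - 1 := by simp only [Cc]; push_cast; ring
    rw [hC] at h
    conv_lhs => rw [← lie_smul, ← hf]
    exact h
  have e2 : ⁅φ (N (y + 1, 0)), N (-1, 0)⁆ = (μ * ((y + 2 : ℤ) : F)) • φ (N (y, 0)) := by
    have h := phi_rel N hN φ hφ (y + 1, 0) (-1, 0)
    rw [idxp] at h
    have hC : Cc (y + 1, 0) (-1, 0) = y + 2 := by simp only [Cc]; push_cast; ring
    have hidx : ((y + 1 + -1 : ℤ), (0 + 0 : ℕ)) = ((y : ℤ), (0 : ℕ)) := by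
      refine Prod.ext ?_ ?_ <;> simp
    rw [hC, hidx, hg, lie_smul] at h
    have := congrArg (fun v => μ • v) h
    simp only [smul_smul] at this
    rw [mul_inv_cancel₀ hμ, one_smul] at this
    exact this
  -- coefficients
  have key : ∀ l : ℕ, 1 ≤ l → N.repr (φ (N (y, 0))) (y, l) = 0 := by
    intro l hl
    have c1 := congrArg (fun v => N.repr v ((y, l) + (1, 0))) e1
    simp only [map_smul, Finsupp.smul_apply, smul_eq_mul] at c1
    rw [repr_lie_right N hN] at c1
    have c2 := congrArg (fun v => N.repr v ((y + 1, l) + (-1, 0))) e2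
    simp only [map_smul, Finsupp.smul_apply, smul_eq_mul] at c2
    rw [repr_lie_right N hN] at c2
    rw [idxp] at c1 c2
    have hC1 : Cc (y, l) (1, 0) = y - (l + 1) := by simp only [Cc]; push_cast; ring
    have hC2 : Cc (y + 1, l) (-1, 0) = y + l + 2 := by simp only [Cc]; push_cast; ring
    have hidx2 : ((y + 1 + -1 : ℤ), (l + 0 : ℕ)) = ((y : ℤ), l) := by
      refine Prod.ext ?_ ?_ <;> simp
    have hidx1 : ((y + 1 : ℤ), (l + 0 : ℕ)) = ((y + 1 : ℤ), l) := by
      refine Prod.ext ?_ ?_ <;> simp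
    rw [hC1, hidx1] at c1
    rw [hC2, hidx2] at c2
    set X := N.repr (φ (N (y, 0))) (y, l) with hX
    set Z := N.repr (φ (N (y + 1, 0))) (y + 1, l) with hZ
    -- c1 : μ * (X * (y - (l+1))) = (y - 1) * Z
    -- c2 : Z * (y + l + 2) = μ * (y+2) * X
    have hfinal : μ * X * ((l : F) * (l + 3)) = 0 := by
      push_cast at c1 c2
      linear_combination (-(((y : F) + l + 2))) * c1 + (-((y : F) - 1)) * c2
    have hlne : ((l : F) * ((l : F) + 3)) ≠ 0 := by
      have h1 : ((l : F)) ≠ 0 := Nat.cast_ne_zero.mpr (by omega)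
      have h2 : ((l : F) + 3) ≠ 0 := by
        have : ((l + 3 : ℕ) : F) ≠ 0 := Nat.cast_ne_zero.mpr (by omega)
        push_cast at this
        exact this
      exact mul_ne_zero h1 h2
    rcases mul_eq_zero.mp hfinal with h | h
    · rcases mul_eq_zero.mp h with h' | h'
      · exact absurd h' hμ
      · exact h'
    · exact absurd h hlne
  apply eq_smul_of_supp_subset N hN
  intro q hq
  have h1 : q.1 = y := hfst q hq
  rcases Nat.eq_zero_or_pos q.2 with h2 | h2
  · exact Prod.ext h1 h2
  · exfalso
    have hq2 := key q.2 h2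
    have hqeq : q = (y, q.2) := Prod.ext h1 rfl
    rw [hqeq] at hq
    exact Finsupp.mem_support_iff.mp hq hq2

/-- Step 5b shape lemma, descending chain: for `y ∉ {-1, 2}`. -/
lemma shapeB (hee : φ (N 0) = N 0) (hμ : μ ≠ 0) (hf : φ (N (1, 0)) = μ • N (1, 0))
    (hg : φ (N (-1, 0)) = μ⁻¹ • N (-1, 0)) (y : ℤ) (hy1 : y ≠ -1) (hy2 : y ≠ 2) :
    φ (N (y, 0)) = (N.repr (φ (N (y, 0))) (y, 0)) • N (y, 0) := by
  have hfst := supp_fst N hN φ hφ hee (y, 0)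
  have e1 : ⁅φ (N (y, 0)), N (-1, 0)⁆ = (μ * ((y + 1 : ℤ) : F)) • φ (N (y - 1, 0)) := by
    have h := phi_rel N hN φ hφ (y, 0) (-1, 0)
    rw [idxp] at h
    have hC : Cc (y, 0) (-1, 0) = y + 1 := by simp only [Cc]; push_cast; ring
    have hidx : ((y + -1 : ℤ), (0 + 0 : ℕ)) = ((y - 1 : ℤ), (0 : ℕ)) := by
      refine Prod.ext ?_ ?_ <;> simp <;> ring
    rw [hC, hidx, hg, lie_smul] at h
    have := congrArg (fun v => μ • v) h
    simp only [smul_smul] at this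
    rw [mul_inv_cancel₀ hμ, one_smul] at this
    exact this
  have e2 : μ • ⁅φ (N (y - 1, 0)), N (1, 0)⁆ = ((y - 2 : ℤ) : F) • φ (N (y, 0)) := by
    have h := phi_rel N hN φ hφ (y - 1, 0) (1, 0)
    rw [idxp] at h
    have hC : Cc (y - 1, 0) (1, 0) = y - 2 := by simp only [Cc]; push_cast; ring
    have hidx : ((y - 1 + 1 : ℤ), (0 + 0 : ℕ)) = ((y : ℤ), (0 : ℕ)) := by
      refine Prod.ext ?_ ?_ <;> simp
    rw [hC, hidx] at h
    conv_lhs => rw [← lie_smul, ← hf]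
    exact h
  have key : ∀ l : ℕ, 1 ≤ l → N.repr (φ (N (y, 0))) (y, l) = 0 := by
    intro l hl
    have c1 := congrArg (fun v => N.repr v ((y, l) + (-1, 0))) e1
    simp only [map_smul, Finsupp.smul_apply, smul_eq_mul] at c1
    rw [repr_lie_right N hN] at c1
    have c2 := congrArg (fun v => N.repr v ((y - 1, l) + (1, 0))) e2
    simp only [map_smul, Finsupp.smul_apply, smul_eq_mul] at c2
    rw [repr_lie_right N hN] at c2
    rw [idxp] at c1 c2
    have hC1 : Cc (y, l) (-1, 0) = y + (l + 1) := by simp only [Cc]; push_cast; ring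
    have hC2 : Cc (y - 1, l) (1, 0) = y - l - 2 := by simp only [Cc]; push_cast; ring
    have hidx1 : ((y + -1 : ℤ), (l + 0 : ℕ)) = ((y - 1 : ℤ), l) := by
      refine Prod.ext ?_ ?_ <;> simp <;> ring
    have hidx2 : ((y - 1 + 1 : ℤ), (l + 0 : ℕ)) = ((y : ℤ), l) := by
      refine Prod.ext ?_ ?_ <;> simp
    rw [hC1, hidx1] at c1
    rw [hC2, hidx2] at c2
    set X := N.repr (φ (N (y, 0))) (y, l) with hX
    set Z := N.repr (φ (N (y - 1, 0))) (y - 1, l) with hZ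
    have hfinal : X * ((l : F) * (l + 3)) = 0 := by
      push_cast at c1 c2
      linear_combination (-((y : F) - l - 2)) * c1 + (-((y : F) + 1)) * c2
    have hlne : ((l : F) * ((l : F) + 3)) ≠ 0 := by
      have h1 : ((l : F)) ≠ 0 := Nat.cast_ne_zero.mpr (by omega)
      have h2 : ((l : F) + 3) ≠ 0 := by
        have : ((l + 3 : ℕ) : F) ≠ 0 := Nat.cast_ne_zero.mpr (by omega)
        push_cast at this
        exact this
      exact mul_ne_zero h1 h2
    rcases mul_eq_zero.mp hfinal with h | h
    · exact h
    · exact absurd h hlne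
  apply eq_smul_of_supp_subset N hN
  intro q hq
  have h1 : q.1 = y := hfst q hq
  rcases Nat.eq_zero_or_pos q.2 with h2 | h2
  · exact Prod.ext h1 h2
  · exfalso
    have hq2 := key q.2 h2
    have hqeq : q = (y, q.2) := Prod.ext h1 rfl
    rw [hqeq] at hq
    exact Finsupp.mem_support_iff.mp hq hq2

/-- Step 5b: `φ (N (y,0)) = μ^y • N (y,0)` for all `y : ℤ`. -/
lemma step5b (hee : φ (N 0) = N 0) (hμ : μ ≠ 0) (hf : φ (N (1, 0)) = μ • N (1, 0))
    (hg : φ (N (-1, 0)) = μ⁻¹ • N (-1, 0)) :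
    ∀ y : ℤ, φ (N (y, 0)) = (μ ^ y) • N (y, 0) := by
  -- the two exceptional values
  have h2 : φ (N (2, 0)) = (μ ^ (2 : ℤ)) • N (2, 0) := by
    have hs := shapeA N hN φ hφ hee hμ hf hg 2 (by omega) (by omega)
    set c := N.repr (φ (N (2, 0))) (2, 0) with hcdef
    have hdn := stepDOWN N hN φ hφ (y := 2) (by omega) hμ hg hs
    norm_num at hdn
    rw [hf] at hdn
    have hinj := smul_left_injective F (N.ne_zero (1, 0)) hdn.symm
    rw [hs]
    have hc : c = μ ^ (2 : ℤ) := by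
      have hμinv : μ⁻¹ * c = μ := hinj
      have hmu2 := congrArg (fun t => μ * t) hμinv
      simp only [← mul_assoc, mul_inv_cancel₀ hμ, one_mul] at hmu2
      rw [hmu2]
      rw [show (2 : ℤ) = 1 + 1 by norm_num, zpow_add₀ hμ, zpow_one]
    rw [hc]
  have hm2 : φ (N (-2, 0)) = (μ ^ (-2 : ℤ)) • N (-2, 0) := by
    have hs := shapeB N hN φ hφ hee hμ hf hg (-2) (by omega) (by omega)
    set c := N.repr (φ (N (-2, 0))) (-2, 0) with hcdef
    have hup := stepUP N hN φ hφ (y := -2) (by omega) hf hs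
    norm_num at hup
    rw [hg] at hup
    have hinj := smul_left_injective F (N.ne_zero (-1, 0)) hup.symm
    rw [hs]
    have hc : c = μ ^ (-2 : ℤ) := by
      have hμc : μ * c = μ⁻¹ := hinj
      have hmu2 := congrArg (fun t => μ⁻¹ * t) hμc
      simp only [← mul_assoc, inv_mul_cancel₀ hμ, one_mul] at hmu2
      rw [hmu2]
      rw [show (-2 : ℤ) = -1 + -1 by norm_num, zpow_add₀ hμ]
      norm_num
    rw [hc]
  intro y
  induction y using Int.induction_on with
  | zero => simpa [← Prod.zero_eq_mk] using hee
  | succ n ih =>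
    by_cases hn : (n : ℤ) = 1
    · rw [show ((n : ℤ) + 1) = 2 by omega]
      exact h2
    · have := stepUP N hN φ hφ (y := n) hn hf ih
      rw [this, zpow_add_one₀ hμ]
      congr 1
      ring
  | pred n ih =>
    by_cases hn : (-(n : ℤ)) = -1
    · rw [show (-(n : ℤ) - 1) = -2 by omega]
      exact hm2
    · have := stepDOWN N hN φ hφ (y := -n) hn hμ hg ih
      rw [this, zpow_sub_one₀ hμ]
      congr 1
      ring


/-- Step 5c shape: `φ (N (0,j))` is a multiple of `N (0,j)`. -/
lemma step5c_shape (hee : φ (N 0) = N 0) (hμ : μ ≠ 0) (hf : φ (N (1, 0)) = μ • N (1, 0))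
    (hg : φ (N (-1, 0)) = μ⁻¹ • N (-1, 0)) (j : ℕ) :
    φ (N (0, j)) = (N.repr (φ (N (0, j))) (0, j)) • N (0, j) := by
  have hfst := supp_fst N hN φ hφ hee (0, j)
  have e1 : μ • ⁅φ (N (0, j)), N (1, 0)⁆ = ((-(j : ℤ) - 1 : ℤ) : F) • φ (N (1, j)) := by
    have h := phi_rel N hN φ hφ (0, j) (1, 0)
    rw [idxp] at h
    have hC : Cc (0, j) (1, 0) = -(j : ℤ) - 1 := by simp only [Cc]; push_cast; ring
    have hidx : ((0 + 1 : ℤ), (j + 0 : ℕ)) = ((1 : ℤ), j) := by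
      refine Prod.ext ?_ ?_ <;> simp
    rw [hC, hidx] at h
    conv_lhs => rw [← lie_smul, ← hf]
    exact h
  have e2 : ⁅φ (N (1, j)), N (-1, 0)⁆ = (μ * (((j : ℤ) + 2 : ℤ) : F)) • φ (N (0, j)) := by
    have h := phi_rel N hN φ hφ (1, j) (-1, 0)
    rw [idxp] at h
    have hC : Cc (1, j) (-1, 0) = (j : ℤ) + 2 := by simp only [Cc]; push_cast; ring
    have hidx : ((1 + -1 : ℤ), (j + 0 : ℕ)) = ((0 : ℤ), j) := by
      refine Prod.ext ?_ ?_ <;> simp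
    rw [hC, hidx, hg, lie_smul] at h
    have := congrArg (fun v => μ • v) h
    simp only [smul_smul] at this
    rw [mul_inv_cancel₀ hμ, one_smul] at this
    exact this
  have key : ∀ l : ℕ, l ≠ j → N.repr (φ (N (0, j))) (0, l) = 0 := by
    intro l hl
    have c1 := congrArg (fun v => N.repr v ((0, l) + (1, 0))) e1
    simp only [map_smul, Finsupp.smul_apply, smul_eq_mul] at c1
    rw [repr_lie_right N hN] at c1
    have c2 := congrArg (fun v => N.repr v ((1, l) + (-1, 0))) e2
    simp only [map_smul, Finsupp.smul_apply, smul_eq_mul] at c2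
    rw [repr_lie_right N hN] at c2
    rw [idxp] at c1 c2
    have hC1 : Cc (0, l) (1, 0) = -(l : ℤ) - 1 := by simp only [Cc]; push_cast; ring
    have hC2 : Cc (1, l) (-1, 0) = (l : ℤ) + 2 := by simp only [Cc]; push_cast; ring
    have hidx1 : ((0 + 1 : ℤ), (l + 0 : ℕ)) = ((1 : ℤ), l) := by
      refine Prod.ext ?_ ?_ <;> simp
    have hidx2 : ((1 + -1 : ℤ), (l + 0 : ℕ)) = ((0 : ℤ), l) := by
      refine Prod.ext ?_ ?_ <;> simp
    rw [hC1, hidx1] at c1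
    rw [hC2, hidx2] at c2
    set X := N.repr (φ (N (0, j))) (0, l) with hX
    set Z := N.repr (φ (N (1, j))) (1, l) with hZ
    -- c1 : μ * (X * (-(l+1))) = (-(j+1)) * Z
    -- c2 : Z * (l + 2) = μ * (j+2) * X
    have hfinal : μ * X * (((j : F) - l) * ((j : F) + l + 3)) = 0 := by
      push_cast at c1 c2
      linear_combination (((l : F) + 2)) * c1 + (-((j : F) + 1)) * c2
    have hlne : (((j : F) - l) * ((j : F) + l + 3)) ≠ 0 := by
      have h1 : ((j : F) - l) ≠ 0 := by
        intro h
        have := sub_eq_zero.mp h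
        exact hl (Nat.cast_injective this).symm
      have h2 : ((j : F) + l + 3) ≠ 0 := by
        have h3 : ((j + l + 3 : ℕ) : F) ≠ 0 := Nat.cast_ne_zero.mpr (by omega)
        push_cast at h3
        exact h3
      exact mul_ne_zero h1 h2
    rcases mul_eq_zero.mp hfinal with h | h
    · rcases mul_eq_zero.mp h with h' | h'
      · exact absurd h' hμ
      · exact h'
    · exact absurd h hlne
  apply eq_smul_of_supp_subset N hN
  intro q hq
  have h1 : q.1 = 0 := hfst q hq
  by_cases h2 : q.2 = j
  · exact Prod.ext h1 h2
  · exfalso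
    have hq2 := key q.2 h2
    have hqeq : q = (0, q.2) := Prod.ext h1 rfl
    rw [hqeq] at hq
    exact Finsupp.mem_support_iff.mp hq hq2

/-- full classification of a base-fixing automorphism. -/
theorem lemmaB (hee : φ (N 0) = N 0) :
    ∃ μ ρ : F, μ ≠ 0 ∧ ρ ≠ 0 ∧
      ∀ (x : ℤ) (i : ℕ), φ (N (x, i)) = (μ ^ x * ρ ^ i) • N (x, i) := by
  obtain ⟨μ, hμ, hf, hg⟩ := step5a N hN φ hφ hee
  have h5b := step5b N hN φ hφ hee hμ hf hg
  set ρfun : ℕ → F := fun j => N.repr (φ (N (0, j))) (0, j) with hρdef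
  have h5c : ∀ j, φ (N (0, j)) = ρfun j • N (0, j) := fun j =>
    step5c_shape N hN φ hφ hee hμ hf hg j
  have hρne : ∀ j, ρfun j ≠ 0 := fun j => coeff_ne_zero N φ (h5c j)
  -- φ (N (1,j)) and φ (N (-1,j))
  have h1j : ∀ j : ℕ, φ (N (1, j)) = (μ * ρfun j) • N (1, j) := by
    intro j
    have h := phi_rel N hN φ hφ (0, j) (1, 0)
    rw [idxp] at h
    have hC : Cc (0, j) (1, 0) = -(j : ℤ) - 1 := by simp only [Cc]; push_cast; ring
    have hidx : ((0 + 1 : ℤ), (j + 0 : ℕ)) = ((1 : ℤ), j) := by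
      refine Prod.ext ?_ ?_ <;> simp
    rw [hC, hidx, h5c j, hf, smul_lie, lie_smul, hN] at h
    have hC2 : Cc (0, j) (1, 0) = -(j : ℤ) - 1 := by simp only [Cc]; push_cast; ring
    rw [hC2, idxp, hidx] at h
    have hcne : ((-(j : ℤ) - 1 : ℤ) : F) ≠ 0 := Int.cast_ne_zero.mpr (by omega)
    apply smul_right_injective B hcne
    simp only
    rw [← h, smul_smul, smul_smul, smul_smul]
    congr 1
    ring
  have hmj : ∀ j : ℕ, φ (N (-1, j)) = (μ⁻¹ * ρfun j) • N (-1, j) := by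
    intro j
    have h := phi_rel N hN φ hφ (0, j) (-1, 0)
    rw [idxp] at h
    have hC : Cc (0, j) (-1, 0) = (j : ℤ) + 1 := by simp only [Cc]; push_cast; ring
    have hidx : ((0 + -1 : ℤ), (j + 0 : ℕ)) = ((-1 : ℤ), j) := by
      refine Prod.ext ?_ ?_ <;> simp
    rw [hC, hidx, h5c j, hg, smul_lie, lie_smul, hN, hC, idxp, hidx] at h
    have hcne : (((j : ℤ) + 1 : ℤ) : F) ≠ 0 := Int.cast_ne_zero.mpr (by omega)
    apply smul_right_injective B hcne
    simp only
    rw [← h, smul_smul, smul_smul, smul_smul]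
    congr 1
    ring
  -- multiplicativity of ρfun
  have hmult : ∀ i j : ℕ, ρfun (i + j) = ρfun i * ρfun j := by
    intro i j
    have h := phi_rel N hN φ hφ (1, i) (-1, j)
    rw [idxp] at h
    have hC : Cc (1, i) (-1, j) = (i : ℤ) + j + 2 := by simp only [Cc]; push_cast; ring
    have hidx : ((1 + -1 : ℤ), (i + j : ℕ)) = ((0 : ℤ), i + j) := by
      refine Prod.ext ?_ ?_ <;> simp
    rw [hC, hidx, h1j i, hmj j, h5c (i + j), smul_lie, lie_smul, hN, hC, idxp, hidx] at h
    have hcne : (((i : ℤ) + j + 2 : ℤ) : F) ≠ 0 := Int.cast_ne_zero.mpr (by omega)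
    rw [smul_smul, smul_smul, smul_smul] at h
    have h2 := smul_left_injective F (N.ne_zero ((0 : ℤ), i + j)) h
    have h3 : (μ * ρfun i) * ((μ⁻¹ * ρfun j)) = ρfun (i + j) := by
      apply mul_right_cancel₀ hcne
      linear_combination h2
    rw [← h3]
    field_simp
    try ring
  have hρ0 : ρfun 0 = 1 := by
    have h := h5c 0
    have h0 : ((0, 0) : ℤ × ℕ) = (0 : ℤ × ℕ) := rfl
    rw [h0, hee] at h
    have h1 : (1 : F) • N (0 : ℤ × ℕ) = ρfun 0 • N (0 : ℤ × ℕ) := by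
      rw [one_smul]
      exact h
    exact (smul_left_injective F (N.ne_zero (0 : ℤ × ℕ)) h1).symm
  have hρpow : ∀ j : ℕ, ρfun j = (ρfun 1) ^ j := by
    intro j
    induction j with
    | zero => simpa using hρ0
    | succ n ih =>
      have := hmult n 1
      rw [this, ih, pow_succ]
  refine ⟨μ, ρfun 1, hμ, hρne 1, ?_⟩
  intro x i
  by_cases hx : x = 0
  · subst hx
    have := h5c i
    rw [this, hρpow i, zpow_zero, one_mul]
  · have h := phi_rel N hN φ hφ (0, i) (x, 0)
    rw [idxp] at h
    have hC : Cc (0, i) (x, 0) = -x * ((i : ℤ) + 1) := by simp only [Cc]; push_cast; ring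
    have hidx : ((0 + x : ℤ), (i + 0 : ℕ)) = ((x : ℤ), i) := by
      refine Prod.ext ?_ ?_ <;> simp
    rw [hC, hidx, h5c i, h5b x, smul_lie, lie_smul, hN, hC, idxp, hidx] at h
    have hcne : ((-x * ((i : ℤ) + 1) : ℤ) : F) ≠ 0 := by
      rw [Int.cast_ne_zero]
      intro hcon
      rcases mul_eq_zero.mp hcon with h' | h'
      · exact hx (by omega)
      · omega
    apply smul_right_injective B hcne
    simp only
    rw [← h, smul_smul, smul_smul, smul_smul]
    rw [hρpow i]
    congr 1
    ring

end Final

/-- index reindexing `(α, i) ↦ (α + i, i)`. -/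
def eqvB : (ℤ × ℕ) ≃ (ℤ × ℕ) where
  toFun p := (p.1 + p.2, p.2)
  invFun p := (p.1 - p.2, p.2)
  left_inv p := by refine Prod.ext ?_ ?_ <;> simp
  right_inv p := by refine Prod.ext ?_ ?_ <;> simp

@[simp] lemma eqvB_symm_apply (p : ℤ × ℕ) : eqvB.symm p = (p.1 - p.2, p.2) := rfl

end AutBlock

open AutBlock in
/-- Theorem 3.1, explicit form. For every Lie algebra automorphism `τ`
of the Block type Lie algebra `B` there exist `μ, ν ∈ F*` and `ξ ∈ {1, −1}` such that
`τ (L (α,i)) = ξ • μ^α • ν^i • L (ξ(α+i)−i, i)` for all `α ∈ ℤ` and `i ∈ ℕ`. -/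
theorem aut_explicit_form
    {F : Type*} [Field F] [IsAlgClosed F] [CharZero F]
    {B : Type*} [LieRing B] [LieAlgebra F B]
    (L : Module.Basis (ℤ × ℕ) F B)
    (hL : ∀ (α β : ℤ) (i j : ℕ),
      ⁅L (α, i), L (β, j)⁆ =
        (((α - 1) * (j + 1) - (β - 1) * (i + 1) : ℤ) : F) • L (α + β, i + j))
    (τ : B ≃ₗ[F] B) (hτ : ∀ x y : B, τ ⁅x, y⁆ = ⁅τ x, τ y⁆) :
    ∃ (μ ν : F) (ξ : ℤ), μ ≠ 0 ∧ ν ≠ 0 ∧ (ξ = 1 ∨ ξ = -1) ∧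
      ∀ (α : ℤ) (i : ℕ),
        τ (L (α, i)) = ((ξ : F) * μ ^ α * ν ^ i) • L (ξ * (α + i) - i, i) := by
  classical
  set N : Module.Basis (ℤ × ℕ) F B := L.reindex eqvB with hNdef
  have hNL : ∀ p : ℤ × ℕ, N p = L (p.1 - p.2, p.2) := by
    intro p
    rw [hNdef, Module.Basis.reindex_apply, eqvB_symm_apply]
  have hN : ∀ p q : ℤ × ℕ, ⁅N p, N q⁆ = ((Cc p q : ℤ) : F) • N (p + q) := by
    intro p q
    have hcoef : ((p.1 - p.2 - 1) * ((q.2 : ℤ) + 1) - (q.1 - q.2 - 1) * ((p.2 : ℤ) + 1) : ℤ)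
        = Cc p q := by
      simp only [Cc]
      push_cast
      ring
    have hidx : (((p.1 - p.2) + (q.1 - q.2) : ℤ), (p.2 + q.2 : ℕ))
        = ((p + q).1 - ((p + q).2 : ℤ), (p + q).2) := by
      refine Prod.ext ?_ ?_
      · simp only [Prod.fst_add, Prod.snd_add]
        push_cast
        ring
      · simp only [Prod.snd_add]
    rw [hNL p, hNL q, hNL (p + q), hL (p.1 - p.2) (q.1 - q.2) p.2 q.2, hcoef, hidx]
  have hLN : ∀ (α : ℤ) (i : ℕ), L (α, i) = N (α + i, i) := by
    intro α i
    rw [hNL (α + i, i)]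
    congr 1
    refine Prod.ext ?_ ?_ <;> simp
  obtain ⟨ξ, hξcases, hξ⟩ := phi_e_sign N hN τ hτ
  rcases hξcases with hξ1 | hξm1
  · -- ξ = 1
    subst hξ1
    have hee : τ (N 0) = N 0 := by
      rw [hξ]
      norm_num
    obtain ⟨μ, ρ, hμ, hρ, hform⟩ := lemmaB N hN τ hτ hee
    refine ⟨μ, μ * ρ, 1, hμ, mul_ne_zero hμ hρ, Or.inl rfl, ?_⟩
    intro α i
    have hidx : (1 : ℤ) * (α + i) - i = α := by ring
    rw [hidx, hLN α i, hform (α + i) i]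
    congr 1
    rw [zpow_add₀ hμ, zpow_natCast, mul_pow]
    push_cast
    ring
  · -- ξ = -1
    subst hξm1
    set φ2 : B ≃ₗ[F] B := τ.trans (flipE N) with hφ2def
    have hφ2 : ∀ x y : B, φ2 ⁅x, y⁆ = ⁅φ2 x, φ2 y⁆ := by
      intro x y
      simp only [hφ2def, LinearEquiv.trans_apply]
      rw [hτ, flipE_lie N hN]
    have hee : φ2 (N 0) = N 0 := by
      simp only [hφ2def, LinearEquiv.trans_apply]
      rw [hξ, map_smul, flipE_basis]
      have : neg1 (0 : ℤ × ℕ) = 0 := by simp [neg1]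
      rw [this]
      push_cast
      rw [smul_neg, ← neg_smul]
      norm_num
    obtain ⟨μ, ρ, hμ, hρ, hform⟩ := lemmaB N hN φ2 hφ2 hee
    have htau : ∀ v : B, τ v = flipE N (φ2 v) := by
      intro v
      simp only [hφ2def, LinearEquiv.trans_apply]
      exact (flipLin_invol N (τ v)).symm
    refine ⟨μ, μ * ρ, -1, hμ, mul_ne_zero hμ hρ, Or.inr rfl, ?_⟩
    intro α i
    have hidx : (-1 : ℤ) * (α + i) - i = -(α + i) - i := by ring
    rw [hidx, hLN α i, htau, hform (α + i) i, map_smul, flipE_basis]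
    have hneg : neg1 ((α + i : ℤ), i) = (-(α + i), i) := by simp [neg1]
    rw [hneg]
    have hidx2 : L (-(α + i) - i, i) = N (-(α + i), i) := by
      rw [hNL (-(α + (i : ℤ)), i)]
    rw [hidx2, smul_neg, ← neg_smul]
    congr 1
    rw [zpow_add₀ hμ, zpow_natCast, mul_pow]
    push_cast
    ring
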